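/- Let M be an NFA with L(M) ⊆ Enc and define, for p, q ∈ Q, rep_M(p, q) = pick_threshold_K(2^{|Q|²}, p, q) ∪ pick_merge_V(p, q), where pick_threshold is taken for the threshold-token sets K_M[p, q] and pick_merge for the vertex-token sets V_M[p, q]. Then L(M) contains a word encoding a positive Vertex Cover instance if and only if decode(L(M̂_{rep_M})) contains a positive Vertex Cover instance. -/

import Mathlib

/-- The fixed five-letter alphabet Σ = {▷, 1, a, #, $}. -/
inductive Letter : Type
  | tri    -- ▷
  | one    -- 1
  | lett   -- a
  | hash   -- #
  | dollar -- $
deriving DecidableEq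

/-- Words over the alphabet Σ. -/
abbrev Word := List Letter

/-- A nondeterministic finite automaton over the fixed alphabet `Letter`,
with state type `Q` (assumed finite via a `Fintype` instance where needed),
transition function `δ`, initial state `q0` and final states `F`. -/
structure NFA' (Q : Type) where
  δ : Q → Letter → Set Q
  q0 : Q
  F : Set Q

namespace NFA'

variable {Q : Type}

/-- One step of the transition function on a set of states. -/
def stepSet (M : NFA' Q) (S : Set Q) (x : Letter) : Set Q := ⋃ q ∈ S, M.δ q x

/-- The extension of the transition function to words (acting on sets of states). -/
def evalFrom (M : NFA' Q) (S : Set Q) (w : Word) : Set Q := w.foldl M.stepSet S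

/-- The language accepted by `M`. -/
def lang (M : NFA' Q) : Set Word := { w | ∃ q ∈ M.F, q ∈ M.evalFrom {M.q0} w }

/-- The automaton `M[p, q]`: same transitions, initial state `p`, unique final state `q`. -/
def between (M : NFA' Q) (p q : Q) : NFA' Q := ⟨M.δ, p, {q}⟩

/-- Every state is reachable from the initial state. -/
def Reachable (M : NFA' Q) : Prop := ∀ q : Q, ∃ w : Word, q ∈ M.evalFrom {M.q0} w

/-- From every state some final state can be reached. -/
def CoReachable (M : NFA' Q) : Prop :=
  ∀ q : Q, ∃ w : Word, ∃ f ∈ M.F, f ∈ M.evalFrom {q} w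

end NFA'

/-- `rep` is a representative function for `M`: each `rep p q` is a finite subset
of `L(M[p, q])`. -/
def IsRepFun {Q : Type} (M : NFA' Q) (rep : Q → Q → Set Word) : Prop :=
  ∀ p q : Q, (rep p q).Finite ∧ rep p q ⊆ (M.between p q).lang

/-- The language `L(M̂_rep)`: all words obtained by concatenating representatives
along a path from the initial state to a final state. -/
def hatLang {Q : Type} (M : NFA' Q) (rep : Q → Q → Set Word) : Set Word :=
  { w | ∃ (m : ℕ) (u : Fin m → Word) (qs : Fin (m + 1) → Q),
      qs 0 = M.q0 ∧ qs (Fin.last m) ∈ M.F ∧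
      (∀ i : Fin m, u i ∈ rep (qs i.castSucc) (qs i.succ)) ∧
      w = (List.ofFn u).flatten }

/-- The threshold token `▷1^k$`. -/
def thresholdTok (k : ℕ) : Word := Letter.tri :: (List.replicate k Letter.one ++ [Letter.dollar])

/-- The left vertex token `▷a^p#`. -/
def leftTok (p : ℕ) : Word := Letter.tri :: (List.replicate p Letter.lett ++ [Letter.hash])

/-- The right vertex token `▷a^q$`. -/
def rightTok (q : ℕ) : Word := Letter.tri :: (List.replicate q Letter.lett ++ [Letter.dollar])

/-- The encoding `▷1^k$ ∏_i (▷a^{p_i}# ▷a^{q_i}$)` of a threshold `k` together with a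
list of (encoded) edges. -/
def encode (k : ℕ) (es : List (ℕ × ℕ)) : Word :=
  thresholdTok k ++ (es.map (fun e => leftTok e.1 ++ rightTok e.2)).flatten

/-- The regular language `Enc = ▷1*$(▷a*#▷a*$)*` of all encodings. -/
def Enc : Set Word := { w | ∃ (k : ℕ) (es : List (ℕ × ℕ)), w = encode k es }

/-- A token: a threshold token, a left vertex token, or a right vertex token. -/
def IsToken (w : Word) : Prop :=
  (∃ k, w = thresholdTok k) ∨ (∃ p, w = leftTok p) ∨ (∃ q, w = rightTok q)

/-- A representative function is token-preserving if all representatives are tokens. -/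
def TokenPreserving {Q : Type} (rep : Q → Q → Set Word) : Prop :=
  ∀ p q : Q, ∀ w ∈ rep p q, IsToken w

/-- A finite simple undirected graph with vertices named by natural numbers:
a finite vertex set and a finite set of undirected edges. -/
structure VCGraph where
  V : Finset ℕ
  E : Finset (Sym2 ℕ)

/-- `G` has a vertex cover of size at most `k`. -/
def HasVC (G : VCGraph) (k : ℕ) : Prop :=
  ∃ S : Finset ℕ, S ⊆ G.V ∧ S.card ≤ k ∧ ∀ e ∈ G.E, ∃ a ∈ S, a ∈ e

/-- `G` has an independent set of size at least `k`. -/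
def HasIS (G : VCGraph) (k : ℕ) : Prop :=
  ∃ S : Finset ℕ, S ⊆ G.V ∧ k ≤ S.card ∧ ∀ a ∈ S, ∀ b ∈ S, s(a, b) ∉ G.E

/-- The graph described by a list of (encoded) edges: vertices are all the numbers
occurring, edges are the non-loop pairs. -/
def graphOf (es : List (ℕ × ℕ)) : VCGraph where
  V := (es.map Prod.fst).toFinset ∪ (es.map Prod.snd).toFinset
  E := ((es.filter (fun e => e.1 ≠ e.2)).map (fun e => s(e.1, e.2))).toFinset

/-- `decode(w) = (G, k)` : the word `w ∈ Enc` encodes the graph `G` and threshold `k`. -/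
def decodesTo (w : Word) (G : VCGraph) (k : ℕ) : Prop :=
  ∃ es : List (ℕ × ℕ), w = encode k es ∧ G = graphOf es

/-- The set of all threshold tokens (the language `▷1*$`). -/
def ThreshTokens : Set Word := { w | ∃ k, w = thresholdTok k }

/-- The set of all vertex tokens (the language `▷a*(#|$)`). -/
def VertTokens : Set Word := { w | (∃ p, w = leftTok p) ∨ (∃ q, w = rightTok q) }

/-- The threshold-token sets `K_M[p, q] = L(M[p, q]) ∩ L(▷1*$)`. -/
def KM {Q : Type} (M : NFA' Q) (p q : Q) : Set Word := (M.between p q).lang ∩ ThreshTokens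

/-- The vertex-token sets `V_M[p, q] = L(M[p, q]) ∩ L(▷a*(#|$))`. -/
def VM {Q : Type} (M : NFA' Q) (p q : Q) : Set Word := (M.between p q).lang ∩ VertTokens

/-- `u, qs` form a characteristic factorization (of `u₀u₁⋯u_m`) with respect to the
states `qs 0 = q₀, qs 1, …`: the first factor is a threshold token from `K_M[q₀, q₁]`,
all later factors are vertex tokens from the corresponding `V_M`-sets, and the last
state is final. -/
def CharFact {Q : Type} (M : NFA' Q) {m : ℕ} (u : Fin (m + 1) → Word)
    (qs : Fin (m + 2) → Q) : Prop :=
  qs 0 = M.q0 ∧ qs (Fin.last (m + 1)) ∈ M.F ∧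
  u 0 ∈ KM M (qs 0) (qs 1) ∧
  ∀ i : Fin (m + 1), 0 < i.val → u i ∈ VM M (qs i.castSucc) (qs i.succ)

/-- A fixed numbering of the alphabet, inducing a linear order on `Letter`. -/
def letterIdx : Letter → ℕ
  | Letter.tri => 0
  | Letter.one => 1
  | Letter.lett => 2
  | Letter.hash => 3
  | Letter.dollar => 4

/-- Strict shortlex order on words: first by length, then lexicographically. -/
def slLT (u v : Word) : Prop :=
  u.length < v.length ∨
    (u.length = v.length ∧ List.Lex (fun a b => letterIdx a < letterIdx b) u v)

/-- Non-strict shortlex order. -/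
def slLE (u v : Word) : Prop := slLT u v ∨ u = v

/-- `w` is the shortlex-smallest element of `S`. -/
def IsSlLeast (S : Set Word) (w : Word) : Prop := w ∈ S ∧ ∀ v ∈ S, slLE w v

/-- The quotient `L/1` of a language: remove the last letter from every word. -/
def langDiv1 (L : Set Word) : Set Word := { w | ∃ σ : Letter, w ++ [σ] ∈ L }

/-- `pick_threshold_T(k, p, q)`: all of `T p q` if it is finite, otherwise the
shortlex-smallest element of `T p q` of length at least `k`. -/
def pickThreshold {Q : Type} (T : Q → Q → Set Word) (k : ℕ) (p q : Q) : Set Word :=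
  { w | ((T p q).Finite ∧ w ∈ T p q) ∨
        (¬ (T p q).Finite ∧ IsSlLeast { v | v ∈ T p q ∧ k ≤ v.length } w) }

/-- The auxiliary function `pick_merge^G_T(p, q)`: for every `A ⊆ Q²` containing
`(p, q)` whose intersection `⋂_{(p',q') ∈ A} T[p',q']/1` is nonempty, it contains the
shortlex-smallest element of that intersection. -/
def pickMergeG {Q : Type} (T : Q → Q → Set Word) (p q : Q) : Set Word :=
  { w | ∃ A : Set (Q × Q), (p, q) ∈ A ∧
        IsSlLeast (⋂ r ∈ A, langDiv1 (T r.1 r.2)) w }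

/-- `pick_merge_T(p, q) = T[p, q] ∩ (pick_merge^G_T(p, q)·Σ)`. -/
def pickMerge {Q : Type} (T : Q → Q → Set Word) (p q : Q) : Set Word :=
  { x | x ∈ T p q ∧ ∃ w ∈ pickMergeG T p q, ∃ σ : Letter, x = w ++ [σ] }

/-- `ps` is a family `pick_separate_T(s, t, ·, ·)`: for some linear order (injection
into ℕ) on the pairs of states, processed in this order, the value at a pair with
finite `T`-set is that whole set, and at a pair with infinite `T`-set it consists of
exactly the `s` shortlex-first elements `w` of `T p q` of length at least `t` whose
`w/1` avoids `v/1` for all `v` in the sets chosen at previously processed pairs. -/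
def IsPickSeparate {Q : Type} (T : Q → Q → Set Word) (s t : ℕ)
    (ps : Q → Q → Set Word) : Prop :=
  ∃ ord : Q × Q → ℕ, Function.Injective ord ∧
    ∀ p q : Q,
      ((T p q).Finite → ps p q = T p q) ∧
      (¬ (T p q).Finite →
        (∀ w ∈ ps p q, w ∈ T p q ∧ t ≤ w.length ∧
          ∀ p' q' : Q, ord (p', q') < ord (p, q) →
            ∀ v ∈ ps p' q', v.dropLast ≠ w.dropLast) ∧
        (ps p q).ncard = s ∧
        (∀ w : Word,
          (w ∈ T p q ∧ t ≤ w.length ∧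
            ∀ p' q' : Q, ord (p', q') < ord (p, q) →
              ∀ v ∈ ps p' q', v.dropLast ≠ w.dropLast) →
          w ∉ ps p q → ∀ v ∈ ps p q, slLE v w))

section Basics

open Letter

variable {Q : Type}

namespace NFA'

variable (M : NFA' Q)

lemma evalFrom_nil (S : Set Q) : M.evalFrom S [] = S := rfl

lemma evalFrom_cons (S : Set Q) (x : Letter) (w : Word) :
    M.evalFrom S (x :: w) = M.evalFrom (M.stepSet S x) w := rfl

lemma evalFrom_append (S : Set Q) (u v : Word) :
    M.evalFrom S (u ++ v) = M.evalFrom (M.evalFrom S u) v := by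
  simp [evalFrom, List.foldl_append]

lemma mem_stepSet {S : Set Q} {x : Letter} {q' : Q} :
    q' ∈ M.stepSet S x ↔ ∃ p ∈ S, q' ∈ M.δ p x := by simp [stepSet]

lemma mem_evalFrom {S : Set Q} {w : Word} {q' : Q} :
    q' ∈ M.evalFrom S w ↔ ∃ p ∈ S, q' ∈ M.evalFrom {p} w := by
  induction w generalizing S with
  | nil => simp [evalFrom_nil]
  | cons x w ih =>
    rw [evalFrom_cons, ih]
    constructor
    · rintro ⟨r, hr, h⟩
      rw [mem_stepSet] at hr
      obtain ⟨p, hp, hr⟩ := hr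
      refine ⟨p, hp, ?_⟩
      rw [evalFrom_cons, ih]
      refine ⟨r, ?_, h⟩
      rw [mem_stepSet]
      exact ⟨p, rfl, hr⟩
    · rintro ⟨p, hp, h⟩
      rw [evalFrom_cons, ih] at h
      obtain ⟨r, hr, h⟩ := h
      rw [mem_stepSet] at hr
      obtain ⟨p', hp', hr⟩ := hr
      cases hp'
      refine ⟨r, ?_, h⟩
      rw [mem_stepSet]
      exact ⟨p, hp, hr⟩

lemma eval_trans {S : Set Q} {u v : Word} {b c : Q}
    (hb : b ∈ M.evalFrom S u) (hc : c ∈ M.evalFrom {b} v) :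
    c ∈ M.evalFrom S (u ++ v) := by
  rw [evalFrom_append, mem_evalFrom]
  exact ⟨b, hb, hc⟩

lemma between_evalFrom (p q : Q) : (M.between p q).evalFrom = M.evalFrom := rfl

lemma mem_lang_between {p q : Q} {w : Word} :
    w ∈ (M.between p q).lang ↔ q ∈ M.evalFrom {p} w := by
  simp only [lang, between, Set.mem_setOf_eq, Set.mem_singleton_iff, exists_eq_left]
  exact Iff.rfl

end NFA'

/-- Chains of factors along states. -/
def repChain (rep : Q → Q → Set Word) : Q → List Word → Q → Prop
  | p, [], q => p = q
  | p, t :: ts, q => ∃ r, t ∈ rep p r ∧ repChain rep r ts q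

lemma repChain_mono {rep1 rep2 : Q → Q → Set Word}
    (h : ∀ p q : Q, rep1 p q ⊆ rep2 p q) :
    ∀ (T : List Word) (p q : Q), repChain rep1 p T q → repChain rep2 p T q := by
  intro T
  induction T with
  | nil => intro p q hh; exact hh
  | cons t ts ih =>
    rintro p q ⟨r, ht, hc⟩
    exact ⟨r, h p r ht, ih r q hc⟩

lemma eval_of_repChain (M : NFA' Q) {rep : Q → Q → Set Word}
    (hsub : ∀ p q : Q, rep p q ⊆ (M.between p q).lang) :
    ∀ (T : List Word) (p q' : Q), repChain rep p T q' → q' ∈ M.evalFrom {p} T.flatten := by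
  intro T
  induction T with
  | nil => rintro p q' rfl; simp [NFA'.evalFrom_nil]
  | cons t ts ih =>
    rintro p q' ⟨r, ht, hc⟩
    rw [List.flatten_cons]
    exact M.eval_trans ((M.mem_lang_between).mp (hsub _ _ ht)) (ih r q' hc)

lemma repChain_lang_of_eval (M : NFA' Q) :
    ∀ (T : List Word) (p q' : Q), q' ∈ M.evalFrom {p} T.flatten →
      repChain (fun p q => (M.between p q).lang) p T q' := by
  intro T
  induction T with
  | nil =>
    intro p q' h
    rw [List.flatten_nil, NFA'.evalFrom_nil] at h
    exact h.symm
  | cons t ts ih =>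
    intro p q' h
    rw [List.flatten_cons, NFA'.evalFrom_append, NFA'.mem_evalFrom] at h
    obtain ⟨r, hr, h⟩ := h
    exact ⟨r, (M.mem_lang_between).mpr hr, ih r q' h⟩

end Basics

section HatLang

variable {Q : Type}

lemma repChain_of_fin {rep : Q → Q → Set Word} :
    ∀ (m : ℕ) (u : Fin m → Word) (qs : Fin (m + 1) → Q),
      (∀ i : Fin m, u i ∈ rep (qs i.castSucc) (qs i.succ)) →
      repChain rep (qs 0) (List.ofFn u) (qs (Fin.last m)) := by
  intro m
  induction m with
  | zero =>
    intro u qs _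
    rw [List.ofFn_zero]
    show qs 0 = qs (Fin.last 0)
    rfl
  | succ n ih =>
    intro u qs hu
    rw [List.ofFn_succ]
    refine ⟨qs 1, ?_, ?_⟩
    · have h0 := hu 0
      simpa [Fin.castSucc_zero, Fin.succ_zero_eq_one] using h0
    · have := ih (fun i => u i.succ) (fun i => qs i.succ) (fun i => ?_)
      · simpa [Fin.succ_last] using this
      · have := hu i.succ
        rwa [← Fin.succ_castSucc] at this

lemma fin_of_repChain {rep : Q → Q → Set Word} :
    ∀ (T : List Word) (p q' : Q), repChain rep p T q' →
      ∃ (u : Fin T.length → Word) (qs : Fin (T.length + 1) → Q),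
        qs 0 = p ∧ qs (Fin.last T.length) = q' ∧
        (∀ i : Fin T.length, u i ∈ rep (qs i.castSucc) (qs i.succ)) ∧
        T.flatten = (List.ofFn u).flatten := by
  intro T
  induction T with
  | nil =>
    rintro p q' rfl
    exact ⟨fun i => i.elim0, fun _ => p, rfl, rfl, fun i => i.elim0, by simp⟩
  | cons t ts ih =>
    rintro p q' ⟨r, ht, hc⟩
    obtain ⟨u', qs', h0, hl, hu, hw⟩ := ih r q' hc
    refine ⟨Fin.cons t u', Fin.cons p qs', rfl, ?_, ?_, ?_⟩
    · simpa [← Fin.succ_last, Fin.cons_succ] using hl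
    · intro i
      refine Fin.cases ?_ ?_ i
      · simpa [Fin.castSucc_zero, Fin.cons_succ, h0] using ht
      · intro j
        have := hu j
        rw [← Fin.succ_castSucc]
        simpa [Fin.cons_succ] using this
    · have he : (fun i : Fin ts.length => Fin.cons (α := fun _ => Word) t u' i.succ) = u' := by
        funext i; simp
      rw [List.flatten_cons, hw, List.ofFn_succ, he, List.flatten_cons, Fin.cons_zero]

lemma mem_hatLang_iff {M : NFA' Q} {rep : Q → Q → Set Word} {w : Word} :
    w ∈ hatLang M rep ↔
      ∃ (T : List Word) (qf : Q), qf ∈ M.F ∧ repChain rep M.q0 T qf ∧ w = T.flatten := by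
  constructor
  · rintro ⟨m, u, qs, h0, hF, hu, rfl⟩
    refine ⟨List.ofFn u, qs (Fin.last m), hF, ?_, by simp⟩
    have := repChain_of_fin m u qs hu
    rwa [h0] at this
  · rintro ⟨T, qf, hF, hc, rfl⟩
    obtain ⟨u, qs, h0, hl, hu, hw⟩ := fin_of_repChain T M.q0 qf hc
    exact ⟨T.length, u, qs, h0, hl ▸ hF, hu, hw⟩

end HatLang

section Tokens

open Letter

/-- The stem `▷a^m` of a vertex token. -/
def stem (m : ℕ) : Word := Letter.tri :: List.replicate m Letter.lett

lemma leftTok_eq_stem (m : ℕ) : leftTok m = stem m ++ [Letter.hash] := by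
  simp [leftTok, stem]

lemma rightTok_eq_stem (m : ℕ) : rightTok m = stem m ++ [Letter.dollar] := by
  simp [rightTok, stem]

lemma stem_length (m : ℕ) : (stem m).length = m + 1 := by simp [stem]

lemma thresholdTok_length (k : ℕ) : (thresholdTok k).length = k + 2 := by
  simp [thresholdTok]

/-- Counting the `#`/`$` letters of a word. -/
def cnt : Word → ℕ
  | [] => 0
  | x :: w => (if x = Letter.hash ∨ x = Letter.dollar then 1 else 0) + cnt w

lemma cnt_nil : cnt [] = 0 := rfl

lemma cnt_append (u v : Word) : cnt (u ++ v) = cnt u + cnt v := by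
  induction u with
  | nil => simp [cnt]
  | cons x u ih => simp [cnt, ih]; ring

lemma cnt_replicate (n : ℕ) (c : Letter) (h : ¬(c = Letter.hash ∨ c = Letter.dollar)) :
    cnt (List.replicate n c) = 0 := by
  induction n with
  | zero => rfl
  | succ n ih => rw [List.replicate_succ]; simp [cnt, h, ih]

lemma cnt_thresholdTok (k : ℕ) : cnt (thresholdTok k) = 1 := by
  simp [thresholdTok, cnt, cnt_append, cnt_replicate]

lemma cnt_leftTok (m : ℕ) : cnt (leftTok m) = 1 := by
  simp [leftTok, cnt, cnt_append, cnt_replicate]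

lemma cnt_rightTok (m : ℕ) : cnt (rightTok m) = 1 := by
  simp [rightTok, cnt, cnt_append, cnt_replicate]

lemma not_tri_mem (n : ℕ) (c x : Letter) (hc : c ≠ Letter.tri) (hx : x ≠ Letter.tri) :
    Letter.tri ∉ List.replicate n c ++ [x] := by
  intro h
  rcases List.mem_append.mp h with h | h
  · exact hc (List.eq_of_mem_replicate h).symm
  · exact hx (List.mem_singleton.mp h).symm

/-- Splitting a word of the form `w1 ++ ▷ ...` against a leading token. -/
lemma split_tok {tokt rest w1 s : Word}
    (h : Letter.tri :: (tokt ++ rest) = w1 ++ Letter.tri :: s)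
    (hno : Letter.tri ∉ tokt) :
    w1 = [] ∨ ∃ w1', w1 = (Letter.tri :: tokt) ++ w1' ∧ rest = w1' ++ Letter.tri :: s := by
  have h' : (Letter.tri :: tokt) ++ rest = w1 ++ Letter.tri :: s := by
    rw [List.cons_append]; exact h
  rcases List.append_eq_append_iff.mp h' with ⟨a', ha1, ha2⟩ | ⟨c', hc1, hc2⟩
  · exact Or.inr ⟨a', ha1, ha2⟩
  · cases w1 with
    | nil => exact Or.inl rfl
    | cons h1 w1t =>
      cases c' with
      | nil =>
        refine Or.inr ⟨[], ?_, ?_⟩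
        · rw [List.append_nil] at hc1 ⊢; exact hc1.symm
        · rw [List.nil_append] at hc2 ⊢; exact hc2.symm
      | cons ch c't =>
        exfalso
        rw [List.cons_append] at hc2
        injection hc2 with he1 he2
        rw [List.cons_append] at hc1
        injection hc1 with hg1 hg2
        apply hno
        rw [hg2, ← he1]
        exact List.mem_append.mpr (Or.inr List.mem_cons_self)

lemma repl_sep {c : Letter} :
    ∀ (a b : ℕ) (x y : Letter) (u v : Word),
      List.replicate a c ++ x :: u = List.replicate b c ++ y :: v →
      x ≠ c → y ≠ c → x = y := by
  intro a
  induction a with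
  | zero =>
    intro b x y u v h hx hy
    cases b with
    | zero =>
      simp only [List.replicate_zero, List.nil_append] at h
      injection h with h1 _
    | succ b =>
      rw [List.replicate_succ] at h
      simp only [List.replicate_zero, List.nil_append, List.cons_append] at h
      injection h with h1 _
      exact absurd h1 hx
  | succ a ih =>
    intro b x y u v h hx hy
    cases b with
    | zero =>
      rw [List.replicate_succ] at h
      simp only [List.replicate_zero, List.nil_append, List.cons_append] at h
      injection h with h1 _
      exact absurd h1.symm hy
    | succ b =>
      rw [List.replicate_succ, List.replicate_succ] at h
      simp only [List.cons_append] at h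
      injection h with _ h2
      exact ih b x y u v h2 hx hy

lemma repl_sep2 :
    ∀ (a b : ℕ) (x y : Letter) (u v : Word),
      List.replicate a Letter.one ++ x :: u = List.replicate b Letter.lett ++ y :: v →
      x ≠ Letter.one → x ≠ Letter.lett → y ≠ Letter.one → y ≠ Letter.lett → x = y := by
  intro a b x y u v h hx1 hx2 hy1 hy2
  cases a with
  | zero =>
    cases b with
    | zero =>
      simp only [List.replicate_zero, List.nil_append] at h
      injection h with h1 _
    | succ b =>
      rw [List.replicate_succ] at h
      simp only [List.replicate_zero, List.nil_append, List.cons_append] at h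
      injection h with h1 _
      exact absurd h1 hx2
  | succ a =>
    cases b with
    | zero =>
      rw [List.replicate_succ] at h
      simp only [List.replicate_zero, List.nil_append, List.cons_append] at h
      injection h with h1 _
      exact absurd h1.symm hy1
    | succ b =>
      rw [List.replicate_succ, List.replicate_succ] at h
      simp only [List.cons_append] at h
      injection h with h1 _
      exact absurd h1 (by simp)

lemma parity_body :
    ∀ (es : List (ℕ × ℕ)) (w1 : Word) (m : ℕ) (σ : Letter) (w2 : Word),
      (es.map fun e => leftTok e.1 ++ rightTok e.2).flatten = w1 ++ (stem m ++ σ :: w2) →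
      (σ = Letter.hash ∨ σ = Letter.dollar) →
      (σ = Letter.hash ↔ Even (cnt w1)) := by
  intro es
  induction es with
  | nil =>
    intro w1 m σ w2 h hσ
    exfalso
    have hl := congrArg List.length h
    simp [stem, List.length_append] at hl
  | cons e es ih =>
    intro w1 m σ w2 h hσ
    rw [List.map_cons, List.flatten_cons, List.append_assoc] at h
    have hσ1 : σ ≠ Letter.lett := by rcases hσ with rfl | rfl <;> simp
    have hσ2 : σ ≠ Letter.one := by rcases hσ with rfl | rfl <;> simp
    have h1 : Letter.tri ::
        ((List.replicate e.1 Letter.lett ++ [Letter.hash]) ++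
          (rightTok e.2 ++ (es.map fun e => leftTok e.1 ++ rightTok e.2).flatten))
        = w1 ++ Letter.tri :: (List.replicate m Letter.lett ++ σ :: w2) := by
      rw [← List.cons_append]
      exact h
    rcases split_tok h1 (not_tri_mem _ _ _ (by simp) (by simp)) with rfl | ⟨w1', rfl, hrest⟩
    · -- token boundary at the left token
      rw [List.nil_append] at h1
      injection h1 with _ h2
      rw [List.append_assoc, List.singleton_append] at h2
      have := repl_sep _ _ _ _ _ _ h2 (by simp) hσ1
      constructor
      · intro _; simp [cnt_nil]
      · intro _; exact this.symm
    · have h2 : Letter.tri ::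
          ((List.replicate e.2 Letter.lett ++ [Letter.dollar]) ++
            (es.map fun e => leftTok e.1 ++ rightTok e.2).flatten)
          = w1' ++ Letter.tri :: (List.replicate m Letter.lett ++ σ :: w2) := by
        rw [← List.cons_append]
        exact hrest
      rcases split_tok h2 (not_tri_mem _ _ _ (by simp) (by simp)) with rfl | ⟨w1'', rfl, hrest2⟩
      · -- token boundary at the right token
        rw [List.nil_append] at h2
        injection h2 with _ h3
        rw [List.append_assoc, List.singleton_append] at h3
        have hd := repl_sep _ _ _ _ _ _ h3 (by simp) hσ1
        have hcnt : cnt ((Letter.tri :: (List.replicate e.1 Letter.lett ++ [Letter.hash])) ++ []) = 1 := by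
          rw [List.append_nil]
          simpa [leftTok] using cnt_leftTok e.1
        rw [hcnt]
        constructor
        · intro hh; rw [← hd] at hh; exact absurd hh (by simp)
        · intro hh; exact absurd hh (by decide)
      · have hres : (es.map fun e => leftTok e.1 ++ rightTok e.2).flatten
            = w1'' ++ (stem m ++ σ :: w2) := by
          rw [hrest2, stem, List.cons_append]
        have hiff := ih w1'' m σ w2 hres hσ
        have hcnt : cnt (Letter.tri :: (List.replicate e.1 Letter.lett ++ [Letter.hash]) ++
            ((Letter.tri :: (List.replicate e.2 Letter.lett ++ [Letter.dollar])) ++ w1''))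
            = 1 + (1 + cnt w1'') := by
          rw [cnt_append, cnt_append]
          congr 1
          · simpa [leftTok] using cnt_leftTok e.1
          · congr 1
            simpa [rightTok] using cnt_rightTok e.2
        rw [hcnt]
        rw [Nat.even_iff] at hiff ⊢
        rw [hiff]
        omega

lemma parity_main (k : ℕ) (es : List (ℕ × ℕ)) (w1 : Word) (m : ℕ) (σ : Letter) (w2 : Word)
    (h : encode k es = w1 ++ (stem m ++ σ :: w2))
    (hσ : σ = Letter.hash ∨ σ = Letter.dollar) :
    (σ = Letter.hash ↔ Odd (cnt w1)) := by
  have hσ1 : σ ≠ Letter.lett := by rcases hσ with rfl | rfl <;> simp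
  have hσ2 : σ ≠ Letter.one := by rcases hσ with rfl | rfl <;> simp
  rw [encode, thresholdTok] at h
  have h1 : Letter.tri ::
      ((List.replicate k Letter.one ++ [Letter.dollar]) ++
        (es.map fun e => leftTok e.1 ++ rightTok e.2).flatten)
      = w1 ++ Letter.tri :: (List.replicate m Letter.lett ++ σ :: w2) := by
    rw [← List.cons_append, h, stem, List.cons_append]
  rcases split_tok h1 (not_tri_mem _ _ _ (by simp) (by simp)) with rfl | ⟨w1', rfl, hrest⟩
  · rw [List.nil_append] at h1
    injection h1 with _ h2
    rw [List.append_assoc, List.singleton_append] at h2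
    have hd := repl_sep2 _ _ _ _ _ _ h2 (by simp) (by simp) hσ2 hσ1
    constructor
    · intro hh; rw [← hd] at hh; exact absurd hh (by simp)
    · intro hh; exact absurd hh (by simp [cnt_nil])
  · have hres : (es.map fun e => leftTok e.1 ++ rightTok e.2).flatten
        = w1' ++ (stem m ++ σ :: w2) := by
      rw [hrest, stem, List.cons_append]
    have hiff := parity_body es w1' m σ w2 hres hσ
    have hcnt : cnt (Letter.tri :: (List.replicate k Letter.one ++ [Letter.dollar]) ++ w1')
        = 1 + cnt w1' := by
      rw [cnt_append]
      congr 1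
      simpa [thresholdTok] using cnt_thresholdTok k
    rw [hcnt]
    rw [Nat.even_iff] at hiff
    rw [Nat.odd_iff]
    rw [hiff]
    omega

end Tokens

section Structure

open Letter

variable {Q : Type}

lemma vertTokens_shape {w : Word} (h : w ∈ VertTokens) :
    ∃ m σ, (σ = Letter.hash ∨ σ = Letter.dollar) ∧ w = stem m ++ [σ] := by
  rcases h with ⟨p, rfl⟩ | ⟨q, rfl⟩
  · exact ⟨p, _, Or.inl rfl, leftTok_eq_stem p⟩
  · exact ⟨q, _, Or.inr rfl, rightTok_eq_stem q⟩

lemma langDiv1_VM_shape {M : NFA' Q} {p q : Q} {w : Word} (h : w ∈ langDiv1 (VM M p q)) :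
    ∃ m, w = stem m := by
  obtain ⟨σ, hσ⟩ := h
  obtain ⟨m, τ, hτ, he⟩ := vertTokens_shape hσ.2
  obtain ⟨he1, he2⟩ := List.append_inj' he (by simp)
  exact ⟨m, he1⟩

lemma end_letter {M : NFA' Q} (hEnc : M.lang ⊆ Enc) (hre : M.Reachable) (hco : M.CoReachable)
    {p q : Q} {m m' : ℕ} {σ τ : Letter}
    (hσ : σ = Letter.hash ∨ σ = Letter.dollar) (hτ : τ = Letter.hash ∨ τ = Letter.dollar)
    (h1 : stem m ++ [σ] ∈ (M.between p q).lang)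
    (h2 : stem m' ++ [τ] ∈ (M.between p q).lang) : σ = τ := by
  obtain ⟨w1, hw1⟩ := hre p
  obtain ⟨w2, f, hf, hw2⟩ := hco q
  have key : ∀ (n : ℕ) (ρ : Letter), (ρ = Letter.hash ∨ ρ = Letter.dollar) →
      stem n ++ [ρ] ∈ (M.between p q).lang → (ρ = Letter.hash ↔ Odd (cnt w1)) := by
    intro n ρ hρ hmem
    have hq : q ∈ M.evalFrom {p} (stem n ++ [ρ]) := (M.mem_lang_between).mp hmem
    have hW : w1 ++ ((stem n ++ [ρ]) ++ w2) ∈ M.lang :=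
      ⟨f, hf, M.eval_trans hw1 (M.eval_trans hq hw2)⟩
    obtain ⟨k, es, hke⟩ := hEnc hW
    have hform : encode k es = w1 ++ (stem n ++ ρ :: w2) := by
      have := hke.symm
      simp only [List.append_assoc, List.singleton_append] at this ⊢
      exact this
    exact parity_main k es w1 n ρ w2 hform hρ
  have k1 := key m σ hσ h1
  have k2 := key m' τ hτ h2
  rcases hσ with rfl | rfl <;> rcases hτ with rfl | rfl
  · rfl
  · exfalso; have := k2.mpr (k1.mp rfl); simp at this
  · exfalso; have := k1.mpr (k2.mp rfl); simp at this
  · rfl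

/-- The set of state pairs at which the stem `▷a^n` can occur. -/
def AxS (M : NFA' Q) (n : ℕ) : Set (Q × Q) := {r | stem n ∈ langDiv1 (VM M r.1 r.2)}

/-- The intersection of the `V/1`-sets over `AxS`. -/
def IxS (M : NFA' Q) (n : ℕ) : Set Word := ⋂ r ∈ AxS M n, langDiv1 (VM M r.1 r.2)

/-- The canonical renaming of a vertex value. -/
noncomputable def fM (M : NFA' Q) (n : ℕ) : ℕ := sInf {m | stem m ∈ IxS M n}

lemma stem_mem_IxS (M : NFA' Q) (n : ℕ) : stem n ∈ IxS M n := by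
  apply Set.mem_iInter₂.mpr
  intro r hr
  exact hr

lemma stem_fM_mem (M : NFA' Q) (n : ℕ) : stem (fM M n) ∈ IxS M n :=
  Nat.sInf_mem (⟨n, stem_mem_IxS M n⟩ : Set.Nonempty {m | stem m ∈ IxS M n})

lemma stem_slLE {i j : ℕ} (h : i ≤ j) : slLE (stem i) (stem j) := by
  rcases lt_or_eq_of_le h with h | rfl
  · exact Or.inl (Or.inl (by simp only [stem_length]; omega))
  · exact Or.inr rfl

lemma fM_least {M : NFA' Q} {n : ℕ} {r0 : Q × Q} (h : r0 ∈ AxS M n) :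
    IsSlLeast (IxS M n) (stem (fM M n)) := by
  constructor
  · exact stem_fM_mem M n
  · intro v hv
    have hv0 : v ∈ langDiv1 (VM M r0.1 r0.2) := Set.mem_iInter₂.mp hv r0 h
    obtain ⟨m', rfl⟩ := langDiv1_VM_shape hv0
    exact stem_slLE (Nat.sInf_le (show m' ∈ {m | stem m ∈ IxS M n} from hv))

lemma mem_pickMerge_of {M : NFA' Q} (hEnc : M.lang ⊆ Enc) (hre : M.Reachable)
    (hco : M.CoReachable) {p q : Q} {n : ℕ} {σ : Letter}
    (hσ : σ = Letter.hash ∨ σ = Letter.dollar)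
    (horig : stem n ++ [σ] ∈ (M.between p q).lang) :
    stem (fM M n) ++ [σ] ∈ pickMerge (VM M) p q := by
  have hvm : stem n ++ [σ] ∈ VM M p q := by
    refine ⟨horig, ?_⟩
    rcases hσ with rfl | rfl
    · exact Or.inl ⟨n, (leftTok_eq_stem n).symm⟩
    · exact Or.inr ⟨n, (rightTok_eq_stem n).symm⟩
  have hpq : (p, q) ∈ AxS M n := ⟨σ, hvm⟩
  have hIx : stem (fM M n) ∈ langDiv1 (VM M p q) :=
    Set.mem_iInter₂.mp (stem_fM_mem M n) (p, q) hpq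
  obtain ⟨τ, hmem⟩ := hIx
  have hτ : τ = Letter.hash ∨ τ = Letter.dollar := by
    obtain ⟨m2, σ2, hσ2, he2⟩ := vertTokens_shape hmem.2
    obtain ⟨-, he3⟩ := List.append_inj' he2 (by simp)
    injection he3 with h4 _
    rw [h4]; exact hσ2
  have hts : τ = σ := end_letter hEnc hre hco hτ hσ hmem.1 horig
  refine ⟨by rw [← hts]; exact hmem, stem (fM M n), ⟨AxS M n, hpq, fM_least hpq⟩, σ, rfl⟩

lemma threshTokens_least {S : Set Word} (hsub : S ⊆ ThreshTokens) (hne : S.Nonempty) :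
    ∃ k', thresholdTok k' ∈ S ∧ IsSlLeast S (thresholdTok k') := by
  have hidx : {j | thresholdTok j ∈ S}.Nonempty := by
    obtain ⟨v, hv⟩ := hne
    obtain ⟨j, rfl⟩ := hsub hv
    exact ⟨j, hv⟩
  have hmem := Nat.sInf_mem hidx
  refine ⟨sInf {j | thresholdTok j ∈ S}, hmem, hmem, ?_⟩
  intro v hv
  obtain ⟨j, rfl⟩ := hsub hv
  have hle := Nat.sInf_le (show j ∈ {j | thresholdTok j ∈ S} from hv)
  rcases lt_or_eq_of_le hle with h | h
  · exact Or.inl (Or.inl (by simp only [thresholdTok_length]; omega))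
  · exact Or.inr (by rw [h])

lemma threshold_choice {M : NFA' Q} {r1 : Q} {k : ℕ} (N : ℕ)
    (h : thresholdTok k ∈ (M.between M.q0 r1).lang) :
    ∃ k', thresholdTok k' ∈ pickThreshold (KM M) N M.q0 r1 ∧
      (((KM M M.q0 r1).Finite ∧ k' = k) ∨ N ≤ k' + 2) := by
  have hmem : thresholdTok k ∈ KM M M.q0 r1 := ⟨h, k, rfl⟩
  by_cases hfin : (KM M M.q0 r1).Finite
  · exact ⟨k, Or.inl ⟨hfin, hmem⟩, Or.inl ⟨hfin, rfl⟩⟩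
  · have hsub : {v | v ∈ KM M M.q0 r1 ∧ N ≤ v.length} ⊆ ThreshTokens := fun v hv => hv.1.2
    have hne : Set.Nonempty {v | v ∈ KM M M.q0 r1 ∧ N ≤ v.length} := by
      have hJ : {j | thresholdTok j ∈ KM M M.q0 r1}.Infinite := by
        by_contra hJf
        rw [Set.not_infinite] at hJf
        apply hfin
        have hsub2 : KM M M.q0 r1 ⊆
            thresholdTok '' {j | thresholdTok j ∈ KM M M.q0 r1} := by
          intro v hv
          obtain ⟨j, rfl⟩ := hv.2
          exact ⟨j, hv, rfl⟩
        exact (hJf.image _).subset hsub2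
      obtain ⟨j, hj, hjN⟩ := hJ.exists_gt N
      exact ⟨thresholdTok j, hj, by rw [thresholdTok_length]; omega⟩
    obtain ⟨k', hk'S, hleast⟩ := threshTokens_least hsub hne
    refine ⟨k', Or.inr ⟨hfin, hleast⟩, Or.inr ?_⟩
    have := hk'S.2
    rw [thresholdTok_length] at this
    omega

end Structure

section Transform

open Letter

variable {Q : Type}

/-- The token list of the edge part of an encoding. -/
def toksL : List (ℕ × ℕ) → List Word
  | [] => []
  | e :: es => leftTok e.1 :: rightTok e.2 :: toksL es

lemma flatten_toksL (es : List (ℕ × ℕ)) :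
    (toksL es).flatten = (es.map fun e => leftTok e.1 ++ rightTok e.2).flatten := by
  induction es with
  | nil => rfl
  | cons e es ih => simp [toksL, ih, List.append_assoc]

lemma encode_eq_flatten (k : ℕ) (es : List (ℕ × ℕ)) :
    encode k es = (thresholdTok k :: toksL es).flatten := by
  rw [List.flatten_cons, flatten_toksL, encode]

/-- The canonical renaming applied to an edge. -/
noncomputable def fPair (M : NFA' Q) (e : ℕ × ℕ) : ℕ × ℕ := (fM M e.1, fM M e.2)

lemma transform {M : NFA' Q} (hEnc : M.lang ⊆ Enc) (hre : M.Reachable) (hco : M.CoReachable) :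
    ∀ (es : List (ℕ × ℕ)) (p qf : Q),
      repChain (fun p q => (M.between p q).lang) p (toksL es) qf →
      repChain (pickMerge (VM M)) p (toksL (es.map (fPair M))) qf ∧
        ∀ e ∈ es, (AxS M e.1).Nonempty ∧ (AxS M e.2).Nonempty := by
  intro es
  induction es with
  | nil =>
    intro p qf h
    exact ⟨h, by simp⟩
  | cons e es ih =>
    rintro p qf ⟨r1, hl, r2, hr, hc⟩
    obtain ⟨hc', hne⟩ := ih r2 qf hc
    have hl' : stem e.1 ++ [Letter.hash] ∈ (M.between p r1).lang := by
      rw [← leftTok_eq_stem]; exact hl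
    have hr' : stem e.2 ++ [Letter.dollar] ∈ (M.between r1 r2).lang := by
      rw [← rightTok_eq_stem]; exact hr
    have hL := mem_pickMerge_of hEnc hre hco (Or.inl rfl) hl'
    have hR := mem_pickMerge_of hEnc hre hco (Or.inr rfl) hr'
    refine ⟨⟨r1, ?_, r2, ?_, hc'⟩, ?_⟩
    · rw [leftTok_eq_stem]; exact hL
    · rw [rightTok_eq_stem]; exact hR
    · intro e' he'
      rcases List.mem_cons.mp he' with rfl | he'
      · constructor
        · refine ⟨(p, r1), Letter.hash, hl', Or.inl ⟨e'.1, (leftTok_eq_stem e'.1).symm⟩⟩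
        · refine ⟨(r1, r2), Letter.dollar, hr', Or.inr ⟨e'.2, (rightTok_eq_stem e'.2).symm⟩⟩
      · exact hne e' he'

lemma mem_V_iff {es : List (ℕ × ℕ)} {v : ℕ} :
    v ∈ (graphOf es).V ↔ ∃ e ∈ es, v = e.1 ∨ v = e.2 := by
  simp only [graphOf, Finset.mem_union, List.mem_toFinset, List.mem_map]
  constructor
  · rintro (⟨e, he, rfl⟩ | ⟨e, he, rfl⟩)
    · exact ⟨e, he, Or.inl rfl⟩
    · exact ⟨e, he, Or.inr rfl⟩
  · rintro ⟨e, he, rfl | rfl⟩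
    · exact Or.inl ⟨e, he, rfl⟩
    · exact Or.inr ⟨e, he, rfl⟩

lemma mem_E_iff {es : List (ℕ × ℕ)} {z : Sym2 ℕ} :
    z ∈ (graphOf es).E ↔ ∃ e ∈ es, e.1 ≠ e.2 ∧ z = s(e.1, e.2) := by
  simp only [graphOf, List.mem_toFinset, List.mem_map, List.mem_filter]
  constructor
  · rintro ⟨e, ⟨he, hnd⟩, rfl⟩
    refine ⟨e, he, by simpa using hnd, rfl⟩
  · rintro ⟨e, he, hnd, rfl⟩
    exact ⟨e, ⟨he, by simpa using hnd⟩, rfl⟩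

lemma card_graph_V [Fintype Q] (M : NFA' Q) (es0 : List (ℕ × ℕ))
    (hne : ∀ e ∈ es0, (AxS M e.1).Nonempty ∧ (AxS M e.2).Nonempty) :
    (graphOf (es0.map (fPair M))).V.card ≤ 2 ^ (Fintype.card Q) ^ 2 - 1 := by
  classical
  set g : Set (Q × Q) → ℕ := fun A => sInf {m | stem m ∈ ⋂ r ∈ A, langDiv1 (VM M r.1 r.2)}
    with hg
  have hfM : ∀ n, fM M n = g (AxS M n) := fun n => rfl
  have hsub : ↑(graphOf (es0.map (fPair M))).V ⊆ g '' {A : Set (Q × Q) | A.Nonempty} := by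
    intro v hv
    rw [Finset.mem_coe, mem_V_iff] at hv
    obtain ⟨e', he', hor⟩ := hv
    obtain ⟨e, he, rfl⟩ := List.mem_map.mp he'
    rcases hor with rfl | rfl
    · exact ⟨AxS M e.1, (hne e he).1, (hfM _).symm⟩
    · exact ⟨AxS M e.2, (hne e he).2, (hfM _).symm⟩
  have h1 : (graphOf (es0.map (fPair M))).V.card
      = (↑(graphOf (es0.map (fPair M))).V : Set ℕ).ncard := (Set.ncard_coe_finset _).symm
  have h2 : (↑(graphOf (es0.map (fPair M))).V : Set ℕ).ncard
      ≤ (g '' {A : Set (Q × Q) | A.Nonempty}).ncard :=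
    Set.ncard_le_ncard hsub (Set.toFinite _)
  have h3 : (g '' {A : Set (Q × Q) | A.Nonempty}).ncard
      ≤ ({A : Set (Q × Q) | A.Nonempty}).ncard :=
    Set.ncard_image_le (Set.toFinite _)
  have h4 : ({A : Set (Q × Q) | A.Nonempty}).ncard = 2 ^ (Fintype.card Q) ^ 2 - 1 := by
    have he : {A : Set (Q × Q) | A.Nonempty} = Set.univ \ {(∅ : Set (Q × Q))} := by
      ext A
      simp [Set.nonempty_iff_ne_empty]
    rw [he, Set.ncard_diff_singleton_of_mem (Set.mem_univ _), Set.ncard_univ,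
      Nat.card_eq_fintype_card, Fintype.card_set, Fintype.card_prod]
    congr 1
    rw [pow_two]
  omega

end Transform

/-- For `rep(p,q) = pick_threshold_K(2^{|Q|²}, p, q) ∪ pick_merge_V(p, q)`
(with the threshold-token sets `K_M` and the vertex-token sets `V_M`), `L(M)` contains an
encoded positive Vertex Cover instance iff the finite core `decode(L(M̂_rep))` contains a
positive Vertex Cover instance. -/
theorem stmt9 {Q : Type} [Fintype Q] (M : NFA' Q)
    (hEnc : M.lang ⊆ Enc) (hre : M.Reachable) (hco : M.CoReachable)
    (rep : Q → Q → Set Word)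
    (hrepdef : ∀ p q : Q,
      rep p q = pickThreshold (KM M) (2 ^ (Fintype.card Q) ^ 2) p q ∪ pickMerge (VM M) p q) :
    (∃ w ∈ M.lang, ∃ (G : VCGraph) (k : ℕ), decodesTo w G k ∧ HasVC G k) ↔
      (∃ w ∈ hatLang M rep, ∃ (G : VCGraph) (k : ℕ), decodesTo w G k ∧ HasVC G k) := by

  classical
  have hrepsub : ∀ p q : Q, rep p q ⊆ (M.between p q).lang := by
    intro p q x hx
    rw [hrepdef] at hx
    rcases hx with (⟨-, hx⟩ | ⟨-, hx⟩) | hx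
    · exact hx.1
    · exact hx.1.1.1
    · exact hx.1.1
  constructor
  · rintro ⟨w, hw, G, k, ⟨es, rfl, rfl⟩, hVC⟩
    obtain ⟨qf, hqf, hev⟩ := hw
    rw [encode_eq_flatten] at hev
    have hchain := repChain_lang_of_eval M _ _ _ hev
    obtain ⟨r1, hth, hrest⟩ := hchain
    obtain ⟨k', hk'mem, hk'case⟩ := threshold_choice (2 ^ (Fintype.card Q) ^ 2) hth
    obtain ⟨hcm, hne⟩ := transform hEnc hre hco es r1 qf hrest
    have hrepchain : repChain rep M.q0
        (thresholdTok k' :: toksL (es.map (fPair M))) qf := by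
      refine ⟨r1, ?_, ?_⟩
      · rw [hrepdef]; exact Or.inl hk'mem
      · exact repChain_mono (fun p q x hx => by rw [hrepdef]; exact Or.inr hx) _ _ _ hcm
    refine ⟨encode k' (es.map (fPair M)),
      mem_hatLang_iff.mpr ⟨_, qf, hqf, hrepchain, encode_eq_flatten k' _⟩,
      graphOf (es.map (fPair M)), k', ⟨es.map (fPair M), rfl, rfl⟩, ?_⟩
    rcases hk'case with ⟨hfin, rfl⟩ | hbig
    · -- finite threshold set: push the old cover forward
      obtain ⟨S, hSV, hSk, hScov⟩ := hVC
      refine ⟨S.image (fM M), ?_, ?_, ?_⟩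
      · intro a ha
        obtain ⟨b, hb, rfl⟩ := Finset.mem_image.mp ha
        obtain ⟨e, he, hor⟩ := mem_V_iff.mp (hSV hb)
        refine mem_V_iff.mpr ⟨fPair M e, List.mem_map_of_mem he, ?_⟩
        rcases hor with rfl | rfl
        · exact Or.inl rfl
        · exact Or.inr rfl
      · exact Finset.card_image_le.trans hSk
      · intro z hz
        obtain ⟨e', he', hnd, rfl⟩ := mem_E_iff.mp hz
        obtain ⟨e, he, rfl⟩ := List.mem_map.mp he'
        have hnd0 : e.1 ≠ e.2 := fun hc => hnd (by rw [fPair, hc])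
        obtain ⟨a, haS, hae⟩ := hScov s(e.1, e.2) (mem_E_iff.mpr ⟨e, he, hnd0, rfl⟩)
        refine ⟨fM M a, Finset.mem_image_of_mem _ haS, ?_⟩
        rcases Sym2.mem_iff.mp hae with rfl | rfl
        · exact Sym2.mem_iff.mpr (Or.inl rfl)
        · exact Sym2.mem_iff.mpr (Or.inr rfl)
    · -- infinite threshold set: the new threshold is large, use an almost-total cover
      have hcard := card_graph_V M es hne
      by_cases hV : (graphOf (es.map (fPair M))).V.Nonempty
      · obtain ⟨v0, hv0⟩ := hV
        refine ⟨(graphOf (es.map (fPair M))).V.erase v0, Finset.erase_subset _ _, ?_, ?_⟩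
        · rw [Finset.card_erase_of_mem hv0]
          generalize hN : 2 ^ (Fintype.card Q) ^ 2 = N at hbig hcard
          omega
        · intro z hz
          obtain ⟨e', he', hnd, rfl⟩ := mem_E_iff.mp hz
          have h1 : e'.1 ∈ (graphOf (es.map (fPair M))).V :=
            mem_V_iff.mpr ⟨e', he', Or.inl rfl⟩
          have h2 : e'.2 ∈ (graphOf (es.map (fPair M))).V :=
            mem_V_iff.mpr ⟨e', he', Or.inr rfl⟩
          rcases eq_or_ne e'.1 v0 with hev0 | hne1
          · refine ⟨e'.2, Finset.mem_erase.mpr ⟨by rw [← hev0]; exact hnd.symm, h2⟩, ?_⟩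
            exact Sym2.mem_iff.mpr (Or.inr rfl)
          · exact ⟨e'.1, Finset.mem_erase.mpr ⟨hne1, h1⟩, Sym2.mem_iff.mpr (Or.inl rfl)⟩
      · refine ⟨∅, by simp, by simp, ?_⟩
        intro z hz
        obtain ⟨e', he', -, rfl⟩ := mem_E_iff.mp hz
        exact absurd ⟨e'.1, mem_V_iff.mpr ⟨e', he', Or.inl rfl⟩⟩ hV
  · rintro ⟨w, hw, G, k, hdec, hVC⟩
    obtain ⟨T, qf, hqfF, hchain, rfl⟩ := mem_hatLang_iff.mp hw
    exact ⟨T.flatten, ⟨qf, hqfF, eval_of_repChain M hrepsub T M.q0 qf hchain⟩, G, k, hdec, hVC⟩
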